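/- For positive integers p, q and any real L > 0, the number of points (x,y) in the SL₂ℕ-orbit of (p,q) satisfying x + y ≤ L is at most L²/(2pq). -/

import Mathlib

open Matrix

/-- The monoid `SL₂ℕ` of 2×2 integer matrices with nonnegative entries
and determinant 1. -/
def SL2N : Set (Matrix (Fin 2) (Fin 2) ℤ) :=
  {A | (∀ i j, 0 ≤ A i j) ∧ A.det = 1}

/-- The `SL₂ℕ`-orbit of a vector. -/
def SL2Norbit (v : Fin 2 → ℤ) : Set (Fin 2 → ℤ) :=
  {w | ∃ A ∈ SL2N, w = A.mulVec v}





lemma sl2n_key {a b c d a' b' c' d' : ℤ}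
    (ha : 0 ≤ a) (hb : 0 ≤ b) (hc : 0 ≤ c)
    (ha' : 0 ≤ a') (hb' : 0 ≤ b') (hc' : 0 ≤ c')
    (hdet : a * d - b * c = 1) (hdet' : a' * d' - b' * c' = 1)
    (hm : a + c = a' + c') (hn : b + d = b' + d') :
    a = a' ∧ b = b' ∧ c = c' ∧ d = d' := by
  have key : a * (b + d) - b * (a + c) = 1 := by linear_combination hdet
  have key' : a' * (b + d) - b' * (a + c) = 1 := by
    rw [hm, hn]; linear_combination hdet'
  have hm1 : 1 ≤ a + c := by
    by_contra h
    have ha0 : a = 0 := by omega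
    have hc0 : c = 0 := by omega
    rw [ha0, hc0] at hdet
    simp at hdet
  have hcop : IsCoprime (a + c) (b + d) := ⟨-b, a, by linear_combination key⟩
  have hdvd : (a + c) ∣ (a - a') := by
    refine hcop.dvd_of_dvd_mul_right ⟨b - b', ?_⟩
    linear_combination key - key'
  obtain ⟨k, hk⟩ := hdvd
  have hba' : a' ≤ a + c := by omega
  have hba : a ≤ a + c := by linarith
  have hk1 : k = -1 ∨ k = 0 ∨ k = 1 := by
    rcases lt_trichotomy k 0 with h | h | h
    · left
      by_contra hne
      have h2 : k ≤ -2 := by omega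
      nlinarith
    · right; left; exact h
    · right; right
      by_contra hne
      have h2 : 2 ≤ k := by omega
      nlinarith
  have haa : a = a' := by
    rcases hk1 with h | h | h
    · rw [h] at hk
      have ha0 : a = 0 := by omega
      exfalso
      rw [ha0] at key
      nlinarith [mul_nonneg hb (show (0:ℤ) ≤ 0 + c by omega)]
    · rw [h] at hk; omega
    · rw [h] at hk
      have ha'0 : a' = 0 := by omega
      exfalso
      rw [ha'0] at key'
      nlinarith [mul_nonneg hb' (show (0:ℤ) ≤ a + c by omega)]
  have hbb : b = b' := by
    have h0 : (b - b') * (a + c) = 0 := by linear_combination key' - key + (b + d) * haa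
    rcases mul_eq_zero.mp h0 with h | h
    · omega
    · omega
  exact ⟨haa, hbb, by omega, by omega⟩


-- reflection bound: 2 * |{(i,j) ∈ [1,K]² : i+j ≤ K}| ≤ K.toNat²
lemma refl_bound (K : ℤ) :
    2 * ((Finset.Icc 1 K ×ˢ Finset.Icc 1 K).filter (fun x : ℤ × ℤ => x.1 + x.2 ≤ K)).card
      ≤ K.toNat * K.toNat := by
  classical
  set T := (Finset.Icc 1 K ×ˢ Finset.Icc 1 K).filter (fun x : ℤ × ℤ => x.1 + x.2 ≤ K) with hT
  set σ : ℤ × ℤ → ℤ × ℤ := fun x => (K + 1 - x.1, K + 1 - x.2) with hσ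
  have hinj : Function.Injective σ := by
    intro x y hxy
    simp only [σ, Prod.mk.injEq] at hxy
    exact Prod.ext (by omega) (by omega)
  have h1 : (T.image σ).card = T.card := Finset.card_image_of_injective _ hinj
  have hdisj : Disjoint T (T.image σ) := by
    rw [Finset.disjoint_left]
    intro x hx hx'
    simp only [T, Finset.mem_filter, Finset.mem_product, Finset.mem_Icc] at hx
    simp only [T, Finset.mem_image, Finset.mem_filter, Finset.mem_product, Finset.mem_Icc, σ] at hx'
    obtain ⟨y, ⟨⟨_, _⟩, hy⟩, hxy⟩ := hx'
    have h1 : x.1 = K + 1 - y.1 := by rw [← hxy]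
    have h2 : x.2 = K + 1 - y.2 := by rw [← hxy]
    omega
  have hsub : T ∪ T.image σ ⊆ Finset.Icc 1 K ×ˢ Finset.Icc 1 K := by
    intro x hx
    rcases Finset.mem_union.mp hx with h | h
    · exact Finset.mem_of_mem_filter x h
    · simp only [T, Finset.mem_image, Finset.mem_filter, Finset.mem_product, Finset.mem_Icc, σ] at h
      obtain ⟨y, ⟨⟨⟨hy1, hy2⟩, hy3, hy4⟩, hy5⟩, hxy⟩ := h
      have h1 : x.1 = K + 1 - y.1 := by rw [← hxy]
      have h2 : x.2 = K + 1 - y.2 := by rw [← hxy]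
      simp only [Finset.mem_product, Finset.mem_Icc]
      omega
  calc 2 * T.card = T.card + (T.image σ).card := by rw [h1]; ring
    _ = (T ∪ T.image σ).card := (Finset.card_union_of_disjoint hdisj).symm
    _ ≤ (Finset.Icc 1 K ×ˢ Finset.Icc 1 K).card := Finset.card_le_card hsub
    _ = K.toNat * K.toNat := by
        rw [Finset.card_product, Int.card_Icc]
        norm_num

-- block bound
lemma block_bound (p q K : ℤ) (hp : 0 < p) (hq : 0 < q) :
    ((Finset.Icc 1 K ×ˢ Finset.Icc 1 K).filter
        (fun x : ℤ × ℤ => x.1 * p + x.2 * q ≤ K)).card * (p.toNat * q.toNat)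
      ≤ ((Finset.Icc 1 K ×ˢ Finset.Icc 1 K).filter (fun x : ℤ × ℤ => x.1 + x.2 ≤ K)).card := by
  classical
  set Mf := (Finset.Icc 1 K ×ˢ Finset.Icc 1 K).filter (fun x : ℤ × ℤ => x.1 * p + x.2 * q ≤ K) with hMf
  set T := (Finset.Icc 1 K ×ˢ Finset.Icc 1 K).filter (fun x : ℤ × ℤ => x.1 + x.2 ≤ K) with hT
  set B : ℤ × ℤ → Finset (ℤ × ℤ) := fun x =>
    Finset.Icc ((x.1 - 1) * p + 1) (x.1 * p) ×ˢ Finset.Icc ((x.2 - 1) * q + 1) (x.2 * q) with hB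
  have hcard : ∀ x : ℤ × ℤ, (B x).card = p.toNat * q.toNat := by
    intro x
    rw [hB]
    simp only [Finset.card_product, Int.card_Icc]
    congr 1
    · congr 1; ring
    · congr 1; ring
  have hdisjB : ∀ x ∈ Mf, ∀ y ∈ Mf, x ≠ y → Disjoint (B x) (B y) := by
    intro x _ y _ hxy
    rw [Finset.disjoint_left]
    intro z hzx hzy
    simp only [hB, Finset.mem_product, Finset.mem_Icc] at hzx hzy
    apply hxy
    have e1 : x.1 = y.1 := by nlinarith [hzx.1.1, hzx.1.2, hzy.1.1, hzy.1.2]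
    have e2 : x.2 = y.2 := by nlinarith [hzx.2.1, hzx.2.2, hzy.2.1, hzy.2.2]
    exact Prod.ext e1 e2
  have hsubB : Mf.biUnion B ⊆ T := by
    intro z hz
    rcases Finset.mem_biUnion.mp hz with ⟨x, hx, hzx⟩
    simp only [hMf, Finset.mem_filter, Finset.mem_product, Finset.mem_Icc] at hx
    obtain ⟨⟨⟨hx1, _⟩, hx2, _⟩, hxK⟩ := hx
    simp only [hB, Finset.mem_product, Finset.mem_Icc] at hzx
    obtain ⟨⟨hz1, hz2⟩, hz3, hz4⟩ := hzx
    have hp1 : 0 ≤ (x.1 - 1) * p := mul_nonneg (by omega) hp.le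
    have hq1 : 0 ≤ (x.2 - 1) * q := mul_nonneg (by omega) hq.le
    simp only [hT, Finset.mem_filter, Finset.mem_product, Finset.mem_Icc]
    constructor
    · constructor
      · constructor <;> omega
      · constructor <;> omega
    · omega
  calc Mf.card * (p.toNat * q.toNat) = ∑ x ∈ Mf, (B x).card := by
        rw [Finset.sum_congr rfl (fun x _ => hcard x), Finset.sum_const, smul_eq_mul]
    _ = (Mf.biUnion B).card := (Finset.card_biUnion hdisjB).symm
    _ ≤ T.card := Finset.card_le_card hsubB

/-- The number of points `(x,y)` of the `SL₂ℕ`-orbit of `(p,q)` with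
`x + y ≤ L` is at most `L²/(2pq)`. -/
theorem sl2n_orbit_count_bound (p q : ℤ) (hp : 0 < p) (hq : 0 < q)
    (L : ℝ) (hL : 0 < L) :
    ((Set.ncard {w ∈ SL2Norbit ![p, q] | ((w 0 : ℝ) + (w 1 : ℝ)) ≤ L}) : ℝ) ≤
      L ^ 2 / (2 * (p : ℝ) * (q : ℝ)) := by
  classical
  set W : Set (Fin 2 → ℤ) := {w ∈ SL2Norbit ![p, q] | ((w 0 : ℝ) + (w 1 : ℝ)) ≤ L} with hWdef
  set K : ℤ := ⌊L⌋ with hKdef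
  set Mf : Finset (ℤ × ℤ) :=
    (Finset.Icc 1 K ×ˢ Finset.Icc 1 K).filter (fun x : ℤ × ℤ => x.1 * p + x.2 * q ≤ K) with hMfdef
  have hmulVec : ∀ A : Matrix (Fin 2) (Fin 2) ℤ,
      A.mulVec ![p, q] = ![A 0 0 * p + A 0 1 * q, A 1 0 * p + A 1 1 * q] := by
    intro A
    funext i
    fin_cases i <;> simp [Matrix.mulVec, dotProduct, Fin.sum_univ_two]
  have hex : ∀ w, w ∈ SL2Norbit ![p, q] → ∃ A, A ∈ SL2N ∧ w = A.mulVec ![p, q] :=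
    fun w h => h
  set f : (Fin 2 → ℤ) → ℤ × ℤ := fun w =>
    if h : w ∈ SL2Norbit ![p, q] then
      ((hex w h).choose 0 0 + (hex w h).choose 1 0,
       (hex w h).choose 0 1 + (hex w h).choose 1 1)
    else (0, 0) with hfdef
  have hfspec : ∀ w (h : w ∈ SL2Norbit ![p, q]),
      ∃ A ∈ SL2N, w = A.mulVec ![p, q] ∧ f w = (A 0 0 + A 1 0, A 0 1 + A 1 1) := by
    intro w h
    refine ⟨(hex w h).choose, (hex w h).choose_spec.1, (hex w h).choose_spec.2, ?_⟩
    simp only [hfdef, dif_pos h]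
  have hcol : ∀ A ∈ SL2N, 1 ≤ A 0 0 + A 1 0 ∧ 1 ≤ A 0 1 + A 1 1 := by
    intro A hA
    obtain ⟨hpos, hdet⟩ := hA
    rw [Matrix.det_fin_two] at hdet
    constructor
    · by_contra h
      have h1 : A 0 0 = 0 := by have := hpos 0 0; have := hpos 1 0; omega
      have h2 : A 1 0 = 0 := by have := hpos 0 0; have := hpos 1 0; omega
      rw [h1, h2] at hdet
      simp at hdet
    · by_contra h
      have h1 : A 0 1 = 0 := by have := hpos 0 1; have := hpos 1 1; omega
      have h2 : A 1 1 = 0 := by have := hpos 0 1; have := hpos 1 1; omega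
      rw [h1, h2] at hdet
      simp at hdet
  have hmem : ∀ w ∈ W, f w ∈ Mf := by
    intro w hw
    obtain ⟨A, hA, hwA, hfw⟩ := hfspec w hw.1
    obtain ⟨hm1, hn1⟩ := hcol A hA
    set m := A 0 0 + A 1 0 with hm
    set n := A 0 1 + A 1 1 with hn
    have hsum2 : w 0 + w 1 = m * p + n * q := by
      rw [hwA, hmulVec]
      simp [hm, hn]
      ring
    have hKle : m * p + n * q ≤ K := by
      rw [hKdef]
      apply Int.le_floor.mpr
      rw [← hsum2]
      push_cast
      exact hw.2
    have hmp : 0 ≤ m * (p - 1) := mul_nonneg (by omega) (by omega)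
    have hnq0 : 0 ≤ (n - 1) * q := mul_nonneg (by omega) hq.le
    have hmq : 0 ≤ n * (q - 1) := mul_nonneg (by omega) (by omega)
    have hmp0 : 0 ≤ (m - 1) * p := mul_nonneg (by omega) hp.le
    have hmK : m ≤ K := by nlinarith
    have hnK : n ≤ K := by nlinarith
    rw [hfw]
    simp only [hMfdef, Finset.mem_filter, Finset.mem_product, Finset.mem_Icc]
    exact ⟨⟨⟨hm1, hmK⟩, hn1, hnK⟩, hKle⟩
  have hinj : Set.InjOn f W := by
    intro w hw w' hw' hff
    obtain ⟨A, hA, hwA, hfw⟩ := hfspec w hw.1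
    obtain ⟨A', hA', hwA', hfw'⟩ := hfspec w' hw'.1
    rw [hfw, hfw'] at hff
    have h1 : A 0 0 + A 1 0 = A' 0 0 + A' 1 0 := congrArg Prod.fst hff
    have h2 : A 0 1 + A 1 1 = A' 0 1 + A' 1 1 := congrArg Prod.snd hff
    have hdA : A 0 0 * A 1 1 - A 0 1 * A 1 0 = 1 := by
      have := hA.2; rwa [Matrix.det_fin_two] at this
    have hdA' : A' 0 0 * A' 1 1 - A' 0 1 * A' 1 0 = 1 := by
      have := hA'.2; rwa [Matrix.det_fin_two] at this
    obtain ⟨e1, e2, e3, e4⟩ := sl2n_key (hA.1 0 0) (hA.1 0 1) (hA.1 1 0)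
      (hA'.1 0 0) (hA'.1 0 1) (hA'.1 1 0) hdA hdA' h1 h2
    have hAA : A = A' := by
      ext i j
      fin_cases i <;> fin_cases j <;> assumption
    rw [hwA, hwA', hAA]
  have step1 : W.ncard ≤ Mf.card := by
    rw [← Set.ncard_coe_finset Mf]
    exact Set.ncard_le_ncard_of_injOn f hmem hinj Mf.finite_toSet
  have step2 := block_bound p q K hp hq
  have step3 := refl_bound K
  have hK0 : 0 ≤ K := Int.floor_nonneg.mpr hL.le
  have hKL : ((K : ℤ) : ℝ) ≤ L := Int.floor_le L
  set T := (Finset.Icc 1 K ×ˢ Finset.Icc 1 K).filter (fun x : ℤ × ℤ => x.1 + x.2 ≤ K) with hTdef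
  have c1 : (W.ncard : ℝ) ≤ (Mf.card : ℝ) := by exact_mod_cast step1
  have hpt : ((p.toNat : ℤ) : ℝ) = (p : ℝ) := by rw [Int.toNat_of_nonneg hp.le]
  have hqt : ((q.toNat : ℤ) : ℝ) = (q : ℝ) := by rw [Int.toNat_of_nonneg hq.le]
  have hKt : ((K.toNat : ℤ) : ℝ) = (K : ℝ) := by rw [Int.toNat_of_nonneg hK0]
  have c2 : (Mf.card : ℝ) * ((p : ℝ) * (q : ℝ)) ≤ (T.card : ℝ) := by
    have h2 : ((Mf.card * (p.toNat * q.toNat) : ℕ) : ℝ) ≤ ((T.card : ℕ) : ℝ) := by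
      exact_mod_cast step2
    push_cast at h2
    push_cast at hpt hqt
    rw [hpt, hqt] at h2
    linarith
  have c3 : 2 * (T.card : ℝ) ≤ (K : ℝ) * (K : ℝ) := by
    have h3 : ((2 * T.card : ℕ) : ℝ) ≤ ((K.toNat * K.toNat : ℕ) : ℝ) := by exact_mod_cast step3
    push_cast at h3
    push_cast at hKt
    rw [hKt] at h3
    linarith
  have c4 : (K : ℝ) * (K : ℝ) ≤ L ^ 2 := by nlinarith [hKL, (Int.cast_nonneg_iff.mpr hK0 : (0:ℝ) ≤ (K:ℝ))]
  rw [le_div_iff₀ (by positivity)]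
  have c5 : (W.ncard : ℝ) * ((p : ℝ) * (q : ℝ)) ≤ (Mf.card : ℝ) * ((p : ℝ) * (q : ℝ)) :=
    mul_le_mul_of_nonneg_right c1 (by positivity)
  have : (W.ncard : ℝ) * (2 * (p : ℝ) * (q : ℝ)) = 2 * ((W.ncard : ℝ) * ((p : ℝ) * (q : ℝ))) := by
    ring
  rw [this]
  linarith
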